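/- arXiv:1610.07829 — 2 statements merged into one kernel-verified Lean document; each statement's English description precedes it below -/
import Mathlib

section
/- Let (Y,d) be a CAT(1) space and let P, Q, R ∈ Y with d(P,Q) < π/2 and d(P,R) < π/2. Let M = ½Q + ½R be the midpoint of the geodesic from Q to R. Then (1/8)·cos(d(M,P))·d(Q,R)² ≤ ½·(d(R,P)² + d(Q,P)²) − d(M,P)². -/
open scoped RealInnerProductSpace

noncomputable def sphereDist (x y : EuclideanSpace ℝ (Fin 3)) : ℝ :=
  Real.arccos ⟪x, y⟫

open Classical in
noncomputable def sphereInterp (x y : EuclideanSpace ℝ (Fin 3)) (t : ℝ) :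
    EuclideanSpace ℝ (Fin 3) :=
  if Real.sin (sphereDist x y) = 0 then x
  else (Real.sin ((1 - t) * sphereDist x y) / Real.sin (sphereDist x y)) • x
     + (Real.sin (t * sphereDist x y) / Real.sin (sphereDist x y)) • y

/-- A CAT(1) structure on a complete metric space `Y`: every pair of points at
distance `< π` is joined by a constant-speed minimizing geodesic
`t ↦ interp P Q t` (the point `(1-t)P + tQ`, at distance `t·d(P,Q)` from `P`),
and every geodesic triangle of perimeter `< 2π` satisfies the CAT(1)
comparison inequality with respect to any comparison triangle on the unit
sphere `S² ⊂ ℝ³` (with the angular metric). -/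
structure CAT1Space (Y : Type*) [MetricSpace Y] [CompleteSpace Y] where
  interp : Y → Y → ℝ → Y
  interp_zero : ∀ P Q : Y, dist P Q < Real.pi → interp P Q 0 = P
  interp_one : ∀ P Q : Y, dist P Q < Real.pi → interp P Q 1 = Q
  interp_dist : ∀ P Q : Y, dist P Q < Real.pi →
    ∀ s t : ℝ, s ∈ Set.Icc (0:ℝ) 1 → t ∈ Set.Icc (0:ℝ) 1 →
      dist (interp P Q s) (interp P Q t) = |s - t| * dist P Q
  comparison : ∀ P Q R : Y,
    dist P Q + dist Q R + dist R P < 2 * Real.pi →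
    ∀ p q r : EuclideanSpace ℝ (Fin 3), ‖p‖ = 1 → ‖q‖ = 1 → ‖r‖ = 1 →
      sphereDist p q = dist P Q → sphereDist q r = dist Q R →
      sphereDist r p = dist R P →
      ∀ s t : ℝ, s ∈ Set.Icc (0:ℝ) 1 → t ∈ Set.Icc (0:ℝ) 1 →
        dist (interp P Q t) (interp R Q s) ≤
          sphereDist (sphereInterp p q t) (sphereInterp r q s)


set_option maxHeartbeats 1000000
section Helpers
open Real Set

-- sinc antitone via concavity of sin
lemma sinc_anti {s t : ℝ} (hs : 0 < s) (hst : s ≤ t) (ht : t ≤ π) :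
    Real.sin t / t ≤ Real.sin s / s := by
  have h0t : 0 < t := lt_of_lt_of_le hs hst
  have key : (s / t) * Real.sin t ≤ Real.sin s := by
    have hcc := strictConcaveOn_sin_Icc.concaveOn
    have := hcc.2 ⟨h0t.le, ht⟩ ⟨le_rfl, pi_pos.le⟩
      (show (0:ℝ) ≤ s / t by positivity)
      (show (0:ℝ) ≤ 1 - s / t by
        have : s / t ≤ 1 := (div_le_one h0t).2 hst; linarith)
      (by ring)
    simpa [smul_eq_mul, Real.sin_zero, div_mul_cancel₀ s h0t.ne'] using this
  rw [div_le_div_iff₀ h0t hs]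
  calc Real.sin t * s = ((s / t) * Real.sin t) * t := by field_simp
    _ ≤ Real.sin s * t := by nlinarith [key, h0t]

lemma convexOn_cos_sqrt : ConvexOn ℝ (Icc (0:ℝ) (π ^ 2)) (fun u => Real.cos (Real.sqrt u)) := by
  have hD : Convex ℝ (Icc (0:ℝ) (π ^ 2)) := convex_Icc _ _
  have hder : ∀ u ∈ interior (Icc (0:ℝ) (π ^ 2)),
      HasDerivAt (fun u => Real.cos (Real.sqrt u))
        (-Real.sin (Real.sqrt u) * (1 / (2 * Real.sqrt u))) u := by
    intro u hu
    rw [interior_Icc] at hu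
    exact (Real.hasDerivAt_sqrt (ne_of_gt hu.1)).cos
  apply MonotoneOn.convexOn_of_deriv hD
  · exact (Real.continuous_cos.comp Real.continuous_sqrt).continuousOn
  · intro u hu
    exact ((hder u hu).differentiableAt).differentiableWithinAt
  · intro u hu v hv huv
    rw [(hder u hu).deriv, (hder v hv).deriv]
    rw [interior_Icc] at hu hv
    have hsu : 0 < Real.sqrt u := Real.sqrt_pos.2 hu.1
    have hsv : 0 < Real.sqrt v := Real.sqrt_pos.2 hv.1
    have h1 : Real.sqrt u ≤ Real.sqrt v := Real.sqrt_le_sqrt huv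
    have h2 : Real.sqrt v ≤ π := by
      rw [show π = Real.sqrt (π ^ 2) by rw [Real.sqrt_sq pi_pos.le]]
      exact Real.sqrt_le_sqrt hv.2.le
    have := sinc_anti hsu h1 h2
    have e1 : -Real.sin (Real.sqrt u) * (1 / (2 * Real.sqrt u))
        = -(Real.sin (Real.sqrt u) / Real.sqrt u) / 2 := by field_simp
    have e2 : -Real.sin (Real.sqrt v) * (1 / (2 * Real.sqrt v))
        = -(Real.sin (Real.sqrt v) / Real.sqrt v) / 2 := by field_simp
    rw [e1, e2]; linarith

lemma arccos_anti {x y : ℝ} (h : x ≤ y) : Real.arccos y ≤ Real.arccos x := by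
  unfold Real.arccos
  have := Real.monotone_arcsin h
  linarith

lemma midpoint_sq {a b : ℝ} (ha : 0 ≤ a) (ha' : a ≤ π/2) (hb : 0 ≤ b) (hb' : b ≤ π/2) :
    Real.arccos ((Real.cos a + Real.cos b)/2) ^ 2 ≤ (a^2 + b^2)/2 := by
  have hpi := pi_pos
  have hmem1 : a^2 ∈ Icc (0:ℝ) (π^2) := ⟨by positivity, by nlinarith⟩
  have hmem2 : b^2 ∈ Icc (0:ℝ) (π^2) := ⟨by positivity, by nlinarith⟩
  have hconv := convexOn_cos_sqrt.2 hmem1 hmem2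
    (show (0:ℝ) ≤ 1/2 by norm_num) (show (0:ℝ) ≤ 1/2 by norm_num) (by norm_num)
  simp only [smul_eq_mul, Real.sqrt_sq ha, Real.sqrt_sq hb] at hconv
  -- hconv : cos √(a²/2 + b²/2) ≤ cos a / 2 + cos b / 2
  set w := Real.sqrt (1/2 * a^2 + 1/2 * b^2) with hw
  have hw0 : 0 ≤ w := Real.sqrt_nonneg _
  have hwpi : w ≤ π := by
    rw [hw, show π = Real.sqrt (π^2) by rw [Real.sqrt_sq hpi.le]]
    exact Real.sqrt_le_sqrt (by nlinarith)
  have harc : Real.arccos ((Real.cos a + Real.cos b)/2) ≤ w := by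
    have h1 : Real.cos w ≤ (Real.cos a + Real.cos b)/2 := by
      have := hconv; linarith
    calc Real.arccos ((Real.cos a + Real.cos b)/2) ≤ Real.arccos (Real.cos w) := by
          exact arccos_anti h1
      _ = w := Real.arccos_cos hw0 hwpi
  have hnn := Real.arccos_nonneg ((Real.cos a + Real.cos b)/2)
  have : w^2 = 1/2*a^2 + 1/2*b^2 := Real.sq_sqrt (by positivity)
  nlinarith

-- 2(cos x − cos y) ≤ y² − x² for 0 ≤ x ≤ y ≤ π
lemma two_cos_sub (x y : ℝ) (hx : 0 ≤ x) (hxy : x ≤ y) (hy : y ≤ π) :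
    2 * (Real.cos x - Real.cos y) ≤ y^2 - x^2 := by
  have h1 : Real.cos x - Real.cos y = 2 * Real.sin ((y+x)/2) * Real.sin ((y-x)/2) := by
    rw [Real.cos_sub_cos, show (x - y)/2 = -((y-x)/2) by ring, Real.sin_neg,
      show (x+y)/2 = (y+x)/2 by ring]
    ring
  have hs1 : Real.sin ((y+x)/2) ≤ (y+x)/2 := Real.sin_le (by linarith)
  have hs1' : 0 ≤ Real.sin ((y+x)/2) :=
    Real.sin_nonneg_of_nonneg_of_le_pi (by linarith) (by linarith)
  have hs2 : Real.sin ((y-x)/2) ≤ (y-x)/2 := Real.sin_le (by linarith)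
  have hs2' : 0 ≤ Real.sin ((y-x)/2) :=
    Real.sin_nonneg_of_nonneg_of_le_pi (by linarith) (by linarith)
  nlinarith

-- the spherical core inequality
lemma core {a b c : ℝ} (ha : 0 ≤ a) (ha' : a ≤ π/2) (hb : 0 ≤ b) (hb' : b ≤ π/2)
    (hc : 0 ≤ c) (hc' : c < π/2)
    (hvle : (Real.cos a + Real.cos b)/(2 * Real.cos c) ≤ 1) :
    (2*c)^2/8 * Real.cos (Real.arccos ((Real.cos a + Real.cos b)/(2 * Real.cos c))) ≤
      (a^2+b^2)/2 - Real.arccos ((Real.cos a + Real.cos b)/(2 * Real.cos c)) ^ 2 := by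
  have hcosc : 0 < Real.cos c := Real.cos_pos_of_mem_Ioo ⟨by linarith [pi_pos], hc'⟩
  have hcosc1 : Real.cos c ≤ 1 := Real.cos_le_one c
  have hca : 0 ≤ Real.cos a := Real.cos_nonneg_of_mem_Icc ⟨by linarith [pi_pos], ha'⟩
  have hcb : 0 ≤ Real.cos b := Real.cos_nonneg_of_mem_Icc ⟨by linarith [pi_pos], hb'⟩
  obtain ⟨v, hv⟩ : ∃ v : ℝ, v = (Real.cos a + Real.cos b)/(2 * Real.cos c) := ⟨_, rfl⟩
  rw [← hv] at hvle ⊢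
  obtain ⟨δ, hδ⟩ : ∃ d : ℝ, d = Real.arccos v := ⟨_, rfl⟩
  rw [← hδ]
  have hv0 : 0 ≤ v := by rw [hv]; positivity
  have hcosδ : Real.cos δ = v := hδ ▸ Real.cos_arccos (by linarith) hvle
  have hδ0 : 0 ≤ δ := hδ ▸ Real.arccos_nonneg v
  have hδpi : δ ≤ π := hδ ▸ Real.arccos_le_pi v
  obtain ⟨μ, hμ⟩ : ∃ m : ℝ, m = Real.arccos ((Real.cos a + Real.cos b)/2) := ⟨_, rfl⟩
  have hμ0 : 0 ≤ μ := hμ ▸ Real.arccos_nonneg _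
  have hμpi : μ ≤ π := hμ ▸ Real.arccos_le_pi _
  have hm1 : (Real.cos a + Real.cos b)/2 ≤ 1 := by
    have hvc : (Real.cos a + Real.cos b)/2 = v * Real.cos c := by
      rw [hv]; field_simp
    nlinarith
  have hcosμ : Real.cos μ = (Real.cos a + Real.cos b)/2 :=
    hμ ▸ Real.cos_arccos (by linarith) hm1
  have hδμ : δ ≤ μ := by
    rw [hδ, hμ]
    apply arccos_anti
    calc (Real.cos a + Real.cos b)/2 = v * Real.cos c := by rw [hv]; field_simp
      _ ≤ v := by nlinarith
  -- μ² − δ² ≥ 2(cos δ − cos μ) = 2 v (1 − cos c) = 4 v sin²(c/2)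
  have h2 : 2 * (Real.cos δ - Real.cos μ) ≤ μ^2 - δ^2 := two_cos_sub δ μ hδ0 hδμ hμpi
  have hsin2 : Real.cos δ - Real.cos μ = v * (1 - Real.cos c) := by
    rw [hcosδ, hcosμ, hv]; field_simp
  have hhalf : 1 - Real.cos c = 2 * Real.sin (c/2)^2 := by
    have := Real.sin_sq_eq_half_sub (c/2)
    rw [show 2 * (c/2) = c by ring] at this
    linarith
  -- 4 sin²(c/2) ≥ c²/2
  have hkey : c^2/2 ≤ 4 * Real.sin (c/2)^2 := by
    rcases eq_or_lt_of_le hc with h|h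
    · simp [← h]
    · have hcle : c/2 ≤ 1 := by
        have : π < 3.15 := pi_lt_d2
        linarith
      have := Real.sin_gt_sub_cube (by linarith : (0:ℝ) < c/2)
      have hsnn : 0 ≤ Real.sin (c/2) :=
        Real.sin_nonneg_of_nonneg_of_le_pi (by linarith) (by linarith [pi_pos])
      have hc2 : c/2 < (79/100 : ℝ) := by
        have : π < 3.15 := pi_lt_d2
        linarith
      have ht2 : (c/2)^2 ≤ (6241/10000 : ℝ) := by nlinarith
      have hlin : (c/2) * (84/100 : ℝ) ≤ (c/2) - (c/2)^3/4 := by nlinarith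
      have hs84 : (c/2) * (84/100 : ℝ) ≤ Real.sin (c/2) := by linarith
      have h84nn : (0:ℝ) ≤ (c/2) * (84/100 : ℝ) := by positivity
      nlinarith [mul_self_le_mul_self h84nn hs84]
  have hmid : μ^2 ≤ (a^2+b^2)/2 := hμ ▸ midpoint_sq ha ha' hb hb'
  have hfin : v * (c^2/2) ≤ v * (4 * Real.sin (c/2)^2) :=
    mul_le_mul_of_nonneg_left hkey hv0
  nlinarith

noncomputable def vec3 (x y z : ℝ) : EuclideanSpace ℝ (Fin 3) :=
  (WithLp.equiv 2 (Fin 3 → ℝ)).symm ![x, y, z]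

lemma vec3_inner (x y z x' y' z' : ℝ) :
    ⟪vec3 x y z, vec3 x' y' z'⟫ = x*x' + y*y' + z*z' := by
  simp [vec3, PiLp.inner_apply, Fin.sum_univ_three, RCLike.inner_apply]
  ring

lemma vec3_norm_one {x y z : ℝ} (h : x^2 + y^2 + z^2 = 1) : ‖vec3 x y z‖ = 1 := by
  have h2 : ‖vec3 x y z‖^2 = 1 := by
    rw [← real_inner_self_eq_norm_sq, vec3_inner]; nlinarith
  nlinarith [norm_nonneg (vec3 x y z)]

lemma sphereInterp_zero (x y : EuclideanSpace ℝ (Fin 3)) : sphereInterp x y 0 = x := by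
  unfold sphereInterp
  split_ifs with h
  · rfl
  · simp [Real.sin_zero, div_self h]

lemma sphereInterp_of_ne (x y : EuclideanSpace ℝ (Fin 3)) (t : ℝ)
    (h : Real.sin (sphereDist x y) ≠ 0) :
    sphereInterp x y t = (Real.sin ((1 - t) * sphereDist x y) / Real.sin (sphereDist x y)) • x
     + (Real.sin (t * sphereDist x y) / Real.sin (sphereDist x y)) • y := by
  unfold sphereInterp; rw [if_neg h]

lemma alg_gram {ca cb cl sb sl : ℝ} (hsb : 0 ≤ sb) (hsl : 0 ≤ sl)
    (hb : sb^2 = 1 - cb^2) (hl : sl^2 = 1 - cl^2)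
    (h1 : ca ≤ cb*cl + sb*sl) (h2 : cb*cl - sb*sl ≤ ca) :
    (ca - cb*cl)^2 ≤ (1 - cb^2)*(1 - cl^2) := by
  nlinarith [mul_nonneg (by linarith : (0:ℝ) ≤ cb*cl + sb*sl - ca)
    (by linarith : (0:ℝ) ≤ ca - (cb*cl - sb*sl))]

lemma alg_z {ca cb cl sl : ℝ} (hsl : 0 < sl)
    (hsq : (ca - cb*cl)^2 ≤ (1 - cb^2)*(1 - cl^2)) (hl : sl^2 = 1 - cl^2) :
    0 ≤ 1 - cb^2 - ((ca - cb*cl)/sl)^2 := by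
  have h1 : ((ca - cb*cl)/sl)^2 * sl^2 = (ca - cb*cl)^2 := by
    field_simp
  have h2 : 0 < 1 - cl^2 := by nlinarith
  nlinarith

lemma vle_lemma {aa β L : ℝ} (haa0 : 0 ≤ aa) (haa2 : aa < Real.pi/2)
    (hβ0 : 0 ≤ β) (hβ2 : β < Real.pi/2) (hL0 : 0 ≤ L) (hLle : L ≤ β + aa) :
    (Real.cos aa + Real.cos β)/(2 * Real.cos (L/2)) ≤ 1 := by
  have hpi := Real.pi_pos
  have hcoshalf : 0 < Real.cos (L/2) :=
    Real.cos_pos_of_mem_Ioo ⟨by linarith, by linarith⟩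
  rw [div_le_one (by positivity)]
  have hcc := Real.cos_add_cos aa β
  have h1 : Real.cos ((aa - β)/2) ≤ 1 := Real.cos_le_one _
  have h2 : 0 ≤ Real.cos ((aa + β)/2) :=
    Real.cos_nonneg_of_mem_Icc ⟨by linarith, by linarith⟩
  have h3 : Real.cos ((aa + β)/2) ≤ Real.cos (L/2) :=
    Real.cos_le_cos_of_nonneg_of_le_pi (by linarith) (by linarith) (by linarith)
  nlinarith

lemma final_arith {x δ L A : ℝ} (hx0 : 0 ≤ x) (hxδ : x ≤ δ) (hδpi : δ ≤ Real.pi)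
    (hL0 : 0 ≤ L) (hL4 : L < 4) (hcore : L^2/8 * Real.cos δ ≤ A - δ^2) :
    1/8 * Real.cos x * L^2 ≤ A - x^2 := by
  have hmono := two_cos_sub x δ hx0 hxδ hδpi
  have hL16 : L^2 ≤ 16 := by nlinarith
  have hd2 : 0 ≤ δ^2 - x^2 := by nlinarith
  have hprod : (Real.cos x - Real.cos δ) * L^2 ≤ ((δ^2 - x^2)/2) * L^2 :=
    mul_le_mul_of_nonneg_right (by linarith) (sq_nonneg L)
  have h16 : ((δ^2 - x^2)/2) * L^2 ≤ (δ^2 - x^2) * 8 := by nlinarith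
  nlinarith

lemma sumsq_aux (t : ℝ) : Real.cos t^2 + Real.sin t^2 + 0^2 = 1 := by
  have := Real.sin_sq_add_cos_sq t; linarith

end Helpers

/-- Convexity bound in a CAT(1) space: with `M` the midpoint of `Q` and `R`,
`(1/8)·cos(d(M,P))·d(Q,R)² ≤ ½(d(R,P)² + d(Q,P)²) − d(M,P)²`. -/
theorem statement5 (Y : Type*) [MetricSpace Y] [CompleteSpace Y]
    (H : CAT1Space Y) (P Q R : Y)
    (hPQ : dist P Q < Real.pi / 2) (hPR : dist P R < Real.pi / 2) :
    (1 / 8) * Real.cos (dist (H.interp Q R (1 / 2)) P) * dist Q R ^ 2 ≤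
      (1 / 2) * (dist R P ^ 2 + dist Q P ^ 2) -
        dist (H.interp Q R (1 / 2)) P ^ 2 := by
  have hpi := Real.pi_pos
  rcases eq_or_lt_of_le (dist_nonneg : (0:ℝ) ≤ dist Q R) with h0 | h0
  · -- degenerate case Q = R
    have hQR : Q = R := dist_eq_zero.mp h0.symm
    subst hQR
    have hlt : dist Q Q < Real.pi := by rw [dist_self]; linarith
    have hM : H.interp Q Q (1/2) = Q := by
      have hd := H.interp_dist Q Q hlt (1/2) 0
        (by constructor <;> norm_num) (by constructor <;> norm_num)
      rw [H.interp_zero Q Q hlt, dist_self] at hd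
      norm_num at hd
      exact hd
    rw [hM, dist_self]
    norm_num
    linarith
  · -- main case
    obtain ⟨β, hβdef⟩ : ∃ b : ℝ, b = dist P Q := ⟨_, rfl⟩
    obtain ⟨aa, haadef⟩ : ∃ b : ℝ, b = dist P R := ⟨_, rfl⟩
    obtain ⟨L, hLdef⟩ : ∃ b : ℝ, b = dist Q R := ⟨_, rfl⟩
    have hβRP : dist Q P = β := by rw [hβdef, dist_comm]
    have haaRP : dist R P = aa := by rw [haadef, dist_comm]
    rw [← hLdef, haaRP, hβRP]
    obtain ⟨x, hxdef⟩ : ∃ b : ℝ, b = dist (H.interp Q R (1/2)) P := ⟨_, rfl⟩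
    rw [← hxdef]
    rw [← hβdef] at hPQ
    rw [← haadef] at hPR
    rw [← hLdef] at h0
    have hβ0 : 0 ≤ β := hβdef ▸ dist_nonneg
    have haa0 : 0 ≤ aa := haadef ▸ dist_nonneg
    have hLle : L ≤ β + aa := by
      rw [hLdef, hβdef, haadef, dist_comm P Q]; exact dist_triangle Q P R
    have haale : aa ≤ β + L := by
      rw [hLdef, hβdef, haadef]; exact dist_triangle P Q R
    have htri : |β - L| ≤ aa := by
      rw [hLdef, hβdef, haadef]
      have := abs_dist_sub_le P R Q
      rwa [dist_comm R Q] at this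
    have hLpi : L < Real.pi := by linarith
    have haapi : aa ≤ Real.pi := by linarith
    have hβpi : β ≤ Real.pi := by linarith
    have hsinL : 0 < Real.sin L := Real.sin_pos_of_pos_of_lt_pi h0 hLpi
    -- comparison triangle
    have hcos1 : Real.cos aa ≤ Real.cos (β - L) := by
      have h1 : Real.cos aa ≤ Real.cos |β - L| :=
        Real.cos_le_cos_of_nonneg_of_le_pi (abs_nonneg _) haapi htri
      rwa [Real.cos_abs] at h1
    have hcos2 : Real.cos (β + L) ≤ Real.cos aa := by
      by_cases hβL : β + L ≤ Real.pi
      · exact Real.cos_le_cos_of_nonneg_of_le_pi haa0 hβL haale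
      · rw [← Real.cos_two_pi_sub]
        exact Real.cos_le_cos_of_nonneg_of_le_pi haa0 (by linarith) (by linarith)
    have hsq : (Real.cos aa - Real.cos β * Real.cos L)^2 ≤
        (1 - Real.cos β^2) * (1 - Real.cos L^2) := by
      refine alg_gram (Real.sin_nonneg_of_nonneg_of_le_pi hβ0 hβpi) hsinL.le
        (Real.sin_sq β) (Real.sin_sq L) ?_ ?_
      · rw [← Real.cos_sub]; exact hcos1
      · rw [← Real.cos_add]; exact hcos2
    obtain ⟨y0, hy0⟩ : ∃ b : ℝ, b = (Real.cos aa - Real.cos β * Real.cos L)/Real.sin L :=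
      ⟨_, rfl⟩
    have hz : 0 ≤ 1 - Real.cos β^2 - y0^2 := by
      rw [hy0]; exact alg_z hsinL hsq (Real.sin_sq L)
    obtain ⟨z0, hz0⟩ : ∃ b : ℝ, b = Real.sqrt (1 - Real.cos β^2 - y0^2) := ⟨_, rfl⟩
    have hz0sq : z0^2 = 1 - Real.cos β^2 - y0^2 := by rw [hz0]; exact Real.sq_sqrt hz
    -- the three sphere points
    have hn1 : ‖vec3 1 0 0‖ = 1 := vec3_norm_one (by norm_num)
    have hn2 : ‖vec3 (Real.cos L) (Real.sin L) 0‖ = 1 := vec3_norm_one (sumsq_aux L)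
    have hn3 : ‖vec3 (Real.cos β) y0 z0‖ = 1 := vec3_norm_one (by rw [hz0sq]; ring)
    have hinpq : ⟪vec3 1 0 0, vec3 (Real.cos L) (Real.sin L) 0⟫ = Real.cos L := by
      rw [vec3_inner]; ring
    have hinpr : ⟪vec3 (Real.cos β) y0 z0, vec3 1 0 0⟫ = Real.cos β := by
      rw [vec3_inner]; ring
    have hinpr' : ⟪vec3 1 0 0, vec3 (Real.cos β) y0 z0⟫ = Real.cos β := by
      rw [vec3_inner]; ring
    have hinqr : ⟪vec3 (Real.cos L) (Real.sin L) 0, vec3 (Real.cos β) y0 z0⟫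
        = Real.cos aa := by
      rw [vec3_inner, hy0]; field_simp; ring
    have hdpq : sphereDist (vec3 1 0 0) (vec3 (Real.cos L) (Real.sin L) 0) = L := by
      unfold sphereDist; rw [hinpq]; exact Real.arccos_cos h0.le hLpi.le
    have hdqr : sphereDist (vec3 (Real.cos L) (Real.sin L) 0) (vec3 (Real.cos β) y0 z0)
        = aa := by
      unfold sphereDist; rw [hinqr]; exact Real.arccos_cos haa0 haapi
    have hdrp : sphereDist (vec3 (Real.cos β) y0 z0) (vec3 1 0 0) = β := by
      unfold sphereDist; rw [hinpr]; exact Real.arccos_cos hβ0 hβpi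
    have hperim : dist Q R + dist R P + dist P Q < 2 * Real.pi := by
      rw [← hLdef, haaRP, ← hβdef]; linarith
    have hcomp := H.comparison Q R P hperim (vec3 1 0 0)
      (vec3 (Real.cos L) (Real.sin L) 0) (vec3 (Real.cos β) y0 z0)
      hn1 hn2 hn3 (hdpq.trans hLdef) (hdqr.trans haaRP.symm)
      (hdrp.trans hβdef) 0 (1/2)
      (by constructor <;> norm_num) (by constructor <;> norm_num)
    rw [H.interp_zero P R (by linarith), sphereInterp_zero] at hcomp
    -- compute the midpoint inner product
    have hsinhalf : 0 < Real.sin (L/2) :=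
      Real.sin_pos_of_pos_of_lt_pi (by linarith) (by linarith)
    have hcoshalf : 0 < Real.cos (L/2) :=
      Real.cos_pos_of_mem_Ioo ⟨by linarith, by linarith⟩
    have hsindup : Real.sin L = 2 * Real.sin (L/2) * Real.cos (L/2) := by
      have := Real.sin_two_mul (L/2)
      rw [show 2*(L/2) = L by ring] at this
      exact this
    have hsne : Real.sin (sphereDist (vec3 1 0 0) (vec3 (Real.cos L) (Real.sin L) 0)) ≠ 0 := by
      rw [hdpq]; exact hsinL.ne'
    have hm := sphereInterp_of_ne (vec3 1 0 0) (vec3 (Real.cos L) (Real.sin L) 0) (1/2) hsne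
    rw [hdpq, show (1 - (1:ℝ)/2) * L = L/2 by ring, show ((1:ℝ)/2) * L = L/2 by ring] at hm
    have hinmr : ⟪sphereInterp (vec3 1 0 0) (vec3 (Real.cos L) (Real.sin L) 0) (1/2),
        vec3 (Real.cos β) y0 z0⟫
        = (Real.cos aa + Real.cos β)/(2 * Real.cos (L/2)) := by
      rw [hm, inner_add_left, real_inner_smul_left, real_inner_smul_left,
        hinpr', hinqr, hsindup]
      field_simp
      ring
    have hxle : x ≤ Real.arccos ((Real.cos aa + Real.cos β)/(2 * Real.cos (L/2))) := by
      rw [hxdef]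
      calc dist (H.interp Q R (1/2)) P
          ≤ sphereDist (sphereInterp (vec3 1 0 0) (vec3 (Real.cos L) (Real.sin L) 0) (1/2))
            (vec3 (Real.cos β) y0 z0) := hcomp
        _ = Real.arccos ((Real.cos aa + Real.cos β)/(2 * Real.cos (L/2))) := by
            unfold sphereDist; rw [hinmr]
    -- bound the comparison argument by 1
    have hvle : (Real.cos aa + Real.cos β)/(2 * Real.cos (L/2)) ≤ 1 :=
      vle_lemma haa0 hPR hβ0 hPQ h0.le hLle
    have hcore := core haa0 (by linarith : aa ≤ Real.pi/2) hβ0 (by linarith : β ≤ Real.pi/2)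
      (by linarith : (0:ℝ) ≤ L/2) (by linarith : L/2 < Real.pi/2) hvle
    rw [show 2*(L/2) = L by ring] at hcore
    obtain ⟨δ, hδdef⟩ : ∃ b : ℝ,
        b = Real.arccos ((Real.cos aa + Real.cos β)/(2 * Real.cos (L/2))) := ⟨_, rfl⟩
    rw [← hδdef] at hcore hxle
    have hδpi : δ ≤ Real.pi := hδdef ▸ Real.arccos_le_pi _
    have hx0 : 0 ≤ x := hxdef ▸ dist_nonneg
    have hL4 : L < 4 := by linarith [Real.pi_le_four]
    have := final_arith hx0 hxle hδpi h0.le hL4 hcore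
    linarith
end

section
/- Let (Ω,μ) be a measure space with μ(Ω) < ∞, let (Y,d) be a CAT(1) space, P ∈ Y, 0 < τ < π/4, and let f : Ω → Y be a measurable map with separable range such that d(f(x),P) ≤ τ for μ-a.e. x. Let Q, R ∈ Y with d(Q,P) ≤ τ and d(R,P) ≤ τ, and let M = ½Q + ½R be the midpoint of the geodesic from Q to R. Then (1/8)·cos(2τ)·d(Q,R)²·μ(Ω) ≤ ½·( ∫_Ω d²(f(x),R) dμ + ∫_Ω d²(f(x),Q) dμ ) − ∫_Ω d²(f(x),M) dμ. -/
open scoped RealInnerProductSpace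

open MeasureTheory

/- ### Auxiliary lemmas -/

lemma aux_sin_scale {s t : ℝ} (hs : 0 ≤ s) (hst : s ≤ t) (ht : t ≤ Real.pi) :
    s * Real.sin t ≤ t * Real.sin s := by
  rcases eq_or_lt_of_le (hs.trans hst) with h | h
  · have ht0 : t = 0 := h.symm
    have hs0 : s = 0 := le_antisymm (ht0 ▸ hst) hs
    simp [ht0, hs0]
  · have h1 : (s/t) • Real.sin t + (1 - s/t) • Real.sin 0 ≤
        Real.sin ((s/t) • t + (1 - s/t) • (0:ℝ)) :=
      strictConcaveOn_sin_Icc.concaveOn.2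
        ⟨hs.trans hst, ht⟩ ⟨le_refl 0, Real.pi_pos.le⟩
        (by positivity)
        (by rw [sub_nonneg]; exact div_le_one_of_le₀ hst h.le) (by ring)
    simp only [smul_eq_mul, Real.sin_zero, mul_zero, add_zero] at h1
    rw [div_mul_cancel₀ _ h.ne'] at h1
    have h2 := mul_le_mul_of_nonneg_left h1 h.le
    calc s * Real.sin t = t * (s / t * Real.sin t) := by field_simp
    _ ≤ t * Real.sin s := h2

lemma aux_cos_sqrt_convexOn :
    ConvexOn ℝ (Set.Icc (0:ℝ) (Real.pi^2)) (fun x => Real.cos (Real.sqrt x)) := by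
  have hint : interior (Set.Icc (0:ℝ) (Real.pi^2)) = Set.Ioo 0 (Real.pi^2) :=
    interior_Icc
  have hd : ∀ x ∈ Set.Ioo (0:ℝ) (Real.pi^2),
      HasDerivAt (fun x => Real.cos (Real.sqrt x))
        (-Real.sin (Real.sqrt x) * (1/(2 * Real.sqrt x))) x := by
    intro x hx
    exact (Real.hasDerivAt_sqrt hx.1.ne').cos
  apply MonotoneOn.convexOn_of_deriv (convex_Icc _ _)
    ((by fun_prop : Continuous fun x : ℝ => Real.cos (Real.sqrt x)).continuousOn)
  · rw [hint]
    exact fun x hx => ((hd x hx).differentiableAt).differentiableWithinAt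
  · rw [hint]
    intro x hx y hy hxy
    rw [(hd x hx).deriv, (hd y hy).deriv]
    have hax : 0 < Real.sqrt x := Real.sqrt_pos.2 hx.1
    have hay : 0 < Real.sqrt y := Real.sqrt_pos.2 hy.1
    have hab : Real.sqrt x ≤ Real.sqrt y := Real.sqrt_le_sqrt hxy
    have hbpi : Real.sqrt y ≤ Real.pi := by
      rw [show Real.pi = Real.sqrt (Real.pi^2) by
        rw [Real.sqrt_sq Real.pi_pos.le]]
      exact Real.sqrt_le_sqrt hy.2.le
    have key := aux_sin_scale hax.le hab hbpi
    rw [neg_mul, neg_mul, neg_le_neg_iff, mul_one_div, mul_one_div,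
      div_le_div_iff₀ (by positivity) (by positivity)]
    nlinarith [key]

set_option maxHeartbeats 1600000 in
/-- The key real inequality. -/
lemma aux_lemA {τ a b θ c : ℝ} (hτ0 : 0 < τ) (hτ : τ < Real.pi/4)
    (ha0 : 0 ≤ a) (ha : a ≤ 2*τ) (hb0 : 0 ≤ b) (hb : b ≤ 2*τ)
    (hθ0 : 0 ≤ θ) (hθ : θ ≤ 2*τ) (htri : θ ≤ a + b)
    (hc0 : 0 ≤ c)
    (hc : c ≤ Real.arccos ((Real.cos a + Real.cos b) / (2 * Real.cos (θ/2)))) :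
    (1/8) * Real.cos (2*τ) * θ^2 ≤ (1/2)*(a^2 + b^2) - c^2 := by
  have hpi := Real.pi_pos
  have h2τ : 2*τ < Real.pi/2 := by linarith
  have hcosθ2 : 0 < Real.cos (θ/2) :=
    Real.cos_pos_of_mem_Ioo ⟨by linarith, by linarith⟩
  have hcos2τ : 0 ≤ Real.cos (2*τ) :=
    Real.cos_nonneg_of_mem_Icc ⟨by linarith, by linarith⟩
  have hm0 : 0 ≤ Real.sqrt ((a^2+b^2)/2) := Real.sqrt_nonneg _
  set m := Real.sqrt ((a^2+b^2)/2) with hmdef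
  have hm2 : m^2 = (a^2+b^2)/2 := Real.sq_sqrt (by positivity)
  have hmτ : m ≤ 2*τ := by
    rw [hmdef, show 2*τ = Real.sqrt ((2*τ)^2) from (Real.sqrt_sq (by linarith)).symm]
    apply Real.sqrt_le_sqrt; nlinarith
  have hstep2 : 2 * Real.cos m ≤ Real.cos a + Real.cos b := by
    have hmem1 : a^2 ∈ Set.Icc (0:ℝ) (Real.pi^2) := by
      constructor <;> nlinarith
    have hmem2 : b^2 ∈ Set.Icc (0:ℝ) (Real.pi^2) := by
      constructor <;> nlinarith
    have hcvx : Real.cos (Real.sqrt ((1/2:ℝ) • a^2 + (1/2:ℝ) • b^2)) ≤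
        (1/2:ℝ) • Real.cos (Real.sqrt (a^2)) + (1/2:ℝ) • Real.cos (Real.sqrt (b^2)) :=
      aux_cos_sqrt_convexOn.2 hmem1 hmem2 (by norm_num) (by norm_num) (by norm_num)
    simp only [smul_eq_mul] at hcvx
    rw [Real.sqrt_sq ha0, Real.sqrt_sq hb0,
      show (1/2:ℝ) * a^2 + 1/2 * b^2 = (a^2+b^2)/2 by ring, ← hmdef] at hcvx
    linarith
  have hcosm : Real.cos (2*τ) ≤ Real.cos m :=
    Real.cos_le_cos_of_nonneg_of_le_pi hm0 (by linarith) hmτ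
  have hcosm0 : 0 ≤ Real.cos m := le_trans hcos2τ hcosm
  have hcosa0 : 0 ≤ Real.cos a :=
    Real.cos_nonneg_of_mem_Icc ⟨by linarith, by linarith⟩
  have hcosb0 : 0 ≤ Real.cos b :=
    Real.cos_nonneg_of_mem_Icc ⟨by linarith, by linarith⟩
  have hz0 : (0:ℝ) ≤ (Real.cos a + Real.cos b) / (2 * Real.cos (θ/2)) := by positivity
  have hz1 : (Real.cos a + Real.cos b) / (2 * Real.cos (θ/2)) ≤ 1 := by
    rw [div_le_one (by positivity)]
    have h1 : Real.cos a + Real.cos b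
        = 2 * Real.cos ((a+b)/2) * Real.cos ((a-b)/2) := Real.cos_add_cos a b
    have h2 : Real.cos ((a+b)/2) ≤ Real.cos (θ/2) :=
      Real.cos_le_cos_of_nonneg_of_le_pi (by linarith) (by linarith) (by linarith)
    have h3 : 0 ≤ Real.cos ((a+b)/2) :=
      Real.cos_nonneg_of_mem_Icc ⟨by linarith, by linarith⟩
    have h4 : Real.cos ((a-b)/2) ≤ 1 := Real.cos_le_one _
    have h5 : Real.cos ((a+b)/2) * Real.cos ((a-b)/2) ≤ Real.cos (θ/2) :=
      le_trans (mul_le_of_le_one_right h3 h4) h2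
    linarith
  have hcπ : c ≤ Real.pi :=
    hc.trans (Real.arccos_le_pi _)
  have hcosc : (Real.cos a + Real.cos b) / (2 * Real.cos (θ/2)) ≤ Real.cos c := by
    have h7 := Real.cos_le_cos_of_nonneg_of_le_pi hc0
      (Real.arccos_le_pi ((Real.cos a + Real.cos b) / (2 * Real.cos (θ/2)))) hc
    rwa [Real.cos_arccos (by linarith) hz1] at h7
  have h6 : Real.cos a + Real.cos b ≤ Real.cos c * (2 * Real.cos (θ/2)) := by
    rw [div_le_iff₀ (by linarith : (0:ℝ) < 2 * Real.cos (θ/2))] at hcosc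
    exact hcosc
  have hkey : 2 * Real.cos m ≤ Real.cos c * (2 * Real.cos (θ/2)) := hstep2.trans h6
  have hcoscm : Real.cos m ≤ Real.cos c := by nlinarith [Real.cos_le_one (θ/2)]
  have hcm : c ≤ m := by
    by_contra hcon
    push_neg at hcon
    have := Real.cos_lt_cos_of_nonneg_of_le_pi hm0 hcπ hcon
    linarith
  have hcosc2τ : Real.cos (2*τ) ≤ Real.cos c := hcosm.trans hcoscm
  have hstep4 : Real.cos (2*τ) * (1 - Real.cos (θ/2)) ≤ Real.cos c - Real.cos m := by
    nlinarith [Real.cos_le_one (θ/2)]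
  have hstep5 : 2 * (Real.cos c - Real.cos m) ≤ m^2 - c^2 := by
    have hid : Real.cos c - Real.cos m
        = -2 * Real.sin ((c+m)/2) * Real.sin ((c-m)/2) := Real.cos_sub_cos c m
    have hodd : Real.sin ((c-m)/2) = - Real.sin ((m-c)/2) := by
      rw [← Real.sin_neg]; ring_nf
    rw [hodd] at hid
    have hs1 : Real.sin ((c+m)/2) ≤ (c+m)/2 := Real.sin_le (by linarith)
    have hs2 : Real.sin ((m-c)/2) ≤ (m-c)/2 := Real.sin_le (by linarith)
    have hs1' : 0 ≤ Real.sin ((c+m)/2) :=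
      Real.sin_nonneg_of_nonneg_of_le_pi (by linarith) (by linarith)
    have hs2' : 0 ≤ Real.sin ((m-c)/2) :=
      Real.sin_nonneg_of_nonneg_of_le_pi (by linarith) (by linarith)
    nlinarith [mul_le_mul hs1 hs2 hs2' (by linarith : (0:ℝ) ≤ (c+m)/2)]
  have hstep6 : θ^2/16 ≤ 1 - Real.cos (θ/2) := by
    have hx : |θ/2| ≤ 1 := by
      rw [abs_of_nonneg (by linarith)]
      nlinarith [Real.pi_lt_d2]
    have hb := Real.cos_bound hx
    rw [abs_le] at hb
    have hx2 : (θ/2)^2 ≤ 1 := by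
      rw [abs_of_nonneg (by linarith)] at hx; nlinarith
    have habs : |θ/2| ^ 4 = (θ/2)^2 * (θ/2)^2 := by
      rw [abs_of_nonneg (by linarith)]; ring
    rw [habs] at hb
    nlinarith [hb.2]
  nlinarith [hm2]

noncomputable def v3 (a b c : ℝ) : EuclideanSpace ℝ (Fin 3) :=
  (WithLp.equiv 2 (Fin 3 → ℝ)).symm ![a, b, c]

lemma v3_inner (a b c a' b' c' : ℝ) :
    ⟪v3 a b c, v3 a' b' c'⟫ = a*a' + b*b' + c*c' := by
  simp [v3, PiLp.inner_apply, Fin.sum_univ_three,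
    RCLike.inner_apply, conj_trivial]
  ring

lemma v3_norm (a b c : ℝ) (h : a^2 + b^2 + c^2 = 1) : ‖v3 a b c‖ = 1 := by
  have h2 : ⟪v3 a b c, v3 a b c⟫ = 1 := by rw [v3_inner]; nlinarith
  have h3 : ‖v3 a b c‖^2 = 1 := by rw [← real_inner_self_eq_norm_sq]; exact h2
  nlinarith [norm_nonneg (v3 a b c)]

set_option maxHeartbeats 1600000 in
/-- The comparison-triangle estimate for the midpoint. -/
lemma aux_lemB {Y : Type*} [MetricSpace Y] [CompleteSpace Y] (H : CAT1Space Y)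
    {τ : ℝ} (hτ0 : 0 < τ) (hτ : τ < Real.pi/4)
    (Q R W : Y) (hQR0 : 0 < dist Q R) (hQR : dist Q R ≤ 2*τ)
    (hRW : dist R W ≤ 2*τ) (hWQ : dist W Q ≤ 2*τ) :
    dist W (H.interp Q R (1/2)) ≤
      Real.arccos ((Real.cos (dist R W) + Real.cos (dist W Q)) /
        (2 * Real.cos (dist Q R / 2))) := by
  have hpi := Real.pi_pos
  have h2τ : 2*τ < Real.pi/2 := by linarith
  set d1 := dist Q R with hd1
  set d2 := dist R W with hd2
  set d3 := dist W Q with hd3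
  have hd10 : 0 ≤ d1 := dist_nonneg
  have hd20 : 0 ≤ d2 := dist_nonneg
  have hd30 : 0 ≤ d3 := dist_nonneg
  have hd1π : d1 < Real.pi/2 := lt_of_le_of_lt hQR h2τ
  have hd2π : d2 < Real.pi/2 := lt_of_le_of_lt hRW h2τ
  have hd3π : d3 < Real.pi/2 := lt_of_le_of_lt hWQ h2τ
  have htri1 : d1 ≤ d2 + d3 := by
    rw [hd1, hd2, hd3]
    calc dist Q R ≤ dist Q W + dist W R := dist_triangle Q W R
    _ = dist R W + dist W Q := by rw [dist_comm Q W, dist_comm W R]; ring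
  have htri2 : d2 ≤ d1 + d3 := by
    rw [hd1, hd2, hd3]
    calc dist R W ≤ dist R Q + dist Q W := dist_triangle R Q W
    _ = dist Q R + dist W Q := by rw [dist_comm R Q, dist_comm Q W]
  have htri3 : d3 ≤ d1 + d2 := by
    rw [hd1, hd2, hd3]
    calc dist W Q ≤ dist W R + dist R Q := dist_triangle W R Q
    _ = dist Q R + dist R W := by rw [dist_comm W R, dist_comm R Q]; ring
  have hs1 : 0 < Real.sin d1 := Real.sin_pos_of_pos_of_lt_pi hQR0 (by linarith)
  have hs3 : 0 ≤ Real.sin d3 := Real.sin_nonneg_of_nonneg_of_le_pi hd30 (by linarith)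
  set x := (Real.cos d2 - Real.cos d1 * Real.cos d3) / Real.sin d1 with hx
  have hxb : x^2 ≤ Real.sin d3 ^ 2 := by
    have hA : Real.cos d2 - Real.cos d1 * Real.cos d3 ≤ Real.sin d1 * Real.sin d3 := by
      have h1 : Real.cos d2 ≤ Real.cos (d1 - d3) := by
        rcases le_total d3 d1 with h | h
        · exact Real.cos_le_cos_of_nonneg_of_le_pi (by linarith) (by linarith) (by linarith)
        · rw [show d1 - d3 = -(d3 - d1) by ring, Real.cos_neg]
          exact Real.cos_le_cos_of_nonneg_of_le_pi (by linarith) (by linarith) (by linarith)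
      rw [Real.cos_sub] at h1; linarith
    have hB : -(Real.sin d1 * Real.sin d3) ≤ Real.cos d2 - Real.cos d1 * Real.cos d3 := by
      have h1 : Real.cos (d1 + d3) ≤ Real.cos d2 :=
        Real.cos_le_cos_of_nonneg_of_le_pi hd20 (by linarith) htri2
      rw [Real.cos_add] at h1; linarith
    have : x * Real.sin d1 = Real.cos d2 - Real.cos d1 * Real.cos d3 := by
      rw [hx]; field_simp
    nlinarith [mul_nonneg (by nlinarith : (0:ℝ) ≤ Real.sin d1 * Real.sin d3 - x * Real.sin d1)
      (by nlinarith : (0:ℝ) ≤ x * Real.sin d1 + Real.sin d1 * Real.sin d3),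
      mul_pos hs1 hs1]
  set y := Real.sqrt (Real.sin d3 ^ 2 - x^2) with hy
  have hy2 : y^2 = Real.sin d3 ^2 - x^2 := Real.sq_sqrt (by linarith)
  set p := v3 1 0 0 with hp
  set q := v3 (Real.cos d1) (Real.sin d1) 0 with hq
  set r := v3 (Real.cos d3) x y with hr
  have hpq : ⟪p, q⟫ = Real.cos d1 := by rw [hp, hq, v3_inner]; ring
  have hpr : ⟪p, r⟫ = Real.cos d3 := by rw [hp, hr, v3_inner]; ring
  have hqr : ⟪q, r⟫ = Real.cos d2 := by
    rw [hq, hr, v3_inner, hx]; field_simp; ring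
  have hnp : ‖p‖ = 1 := v3_norm _ _ _ (by norm_num)
  have hnq : ‖q‖ = 1 := v3_norm _ _ _ (by
    nlinarith [Real.sin_sq_add_cos_sq d1])
  have hnr : ‖r‖ = 1 := v3_norm _ _ _ (by
    nlinarith [Real.sin_sq_add_cos_sq d3])
  have hsd_pq : sphereDist p q = d1 := by
    rw [sphereDist, hpq, Real.arccos_cos hd10 (by linarith)]
  have hsd_qr : sphereDist q r = d2 := by
    rw [sphereDist, hqr, Real.arccos_cos hd20 (by linarith)]
  have hsd_rp : sphereDist r p = d3 := by
    rw [sphereDist, real_inner_comm, hpr, Real.arccos_cos hd30 (by linarith)]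
  have hinterp0 : sphereInterp r q 0 = r := by
    rw [sphereInterp]
    split_ifs with h
    · rfl
    · rw [show ((1:ℝ)-0) = 1 by norm_num, one_mul, zero_mul, Real.sin_zero,
        zero_div, zero_smul, add_zero, div_self h, one_smul]
  have hs1ne : Real.sin (sphereDist p q) ≠ 0 := by rw [hsd_pq]; exact hs1.ne'
  have hmid : sphereInterp p q (1/2) =
      (Real.sin (d1/2) / Real.sin d1) • p + (Real.sin (d1/2) / Real.sin d1) • q := by
    rw [sphereInterp, if_neg hs1ne, hsd_pq,
      show (1 - 1/2 : ℝ) = 1/2 by norm_num, show (1/2 : ℝ) * d1 = d1/2 by ring]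
  have hcoshalf : 0 < Real.cos (d1/2) :=
    Real.cos_pos_of_mem_Ioo ⟨by linarith, by linarith⟩
  have hsinhalf : 0 < Real.sin (d1/2) :=
    Real.sin_pos_of_pos_of_lt_pi (by linarith) (by linarith)
  have hs1eq : Real.sin d1 = 2 * Real.sin (d1/2) * Real.cos (d1/2) := by
    have h := Real.sin_two_mul (d1/2)
    rw [show 2*(d1/2) = d1 by ring] at h
    linarith
  have hinner_mr : ⟪sphereInterp p q (1/2), r⟫
      = (Real.cos d2 + Real.cos d3) / (2 * Real.cos (d1/2)) := by
    rw [hmid, inner_add_left, real_inner_smul_left, real_inner_smul_left, hpr, hqr, hs1eq]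
    field_simp
    ring
  have hWR : dist W R < Real.pi := by
    rw [dist_comm]; rw [← hd2]; linarith
  have hcomp := H.comparison Q R W
    (by rw [← hd1, ← hd2, ← hd3]; linarith : dist Q R + dist R W + dist W Q < 2 * Real.pi)
    p q r hnp hnq hnr hsd_pq hsd_qr hsd_rp 0 (1/2)
    ⟨le_refl 0, by norm_num⟩ ⟨by norm_num, by norm_num⟩
  rw [H.interp_zero W R hWR, hinterp0] at hcomp
  rw [dist_comm]
  calc dist (H.interp Q R (1/2)) W ≤ sphereDist (sphereInterp p q (1/2)) r := hcomp
  _ = Real.arccos ((Real.cos d2 + Real.cos d3) / (2 * Real.cos (d1/2))) := by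
    rw [sphereDist, hinner_mr]

set_option maxHeartbeats 1600000 in

/-- Integrated convexity estimate used to produce the center of mass: for
`Q, R` in the closed `τ`-ball about `P` and `M` their midpoint,
`(1/8)·cos(2τ)·d(Q,R)²·μ(Ω) ≤ ½(∫d²(f,R) + ∫d²(f,Q)) − ∫d²(f,M)`. -/
theorem statement10 (Ω : Type*) [MeasurableSpace Ω] (μ : Measure Ω)
    (hμfin : μ Set.univ < ⊤)
    (Y : Type*) [MetricSpace Y] [CompleteSpace Y] (H : CAT1Space Y)
    (P : Y) (τ : ℝ) (hτ0 : 0 < τ) (hτ : τ < Real.pi / 4)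
    (f : Ω → Y) (hf : StronglyMeasurable f)
    (hball : ∀ᵐ x ∂μ, dist (f x) P ≤ τ)
    (Q R : Y) (hQ : dist Q P ≤ τ) (hR : dist R P ≤ τ) :
    (1 / 8) * Real.cos (2 * τ) * dist Q R ^ 2 * (μ Set.univ).toReal ≤
      (1 / 2) * ((∫ x, dist (f x) R ^ 2 ∂μ) + (∫ x, dist (f x) Q ^ 2 ∂μ)) -
        ∫ x, dist (f x) (H.interp Q R (1 / 2)) ^ 2 ∂μ := by
  haveI : IsFiniteMeasure μ := ⟨hμfin⟩
  have hpi := Real.pi_pos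
  have h2τ : 2*τ < Real.pi/2 := by linarith
  have hQRle : dist Q R ≤ 2*τ := by
    calc dist Q R ≤ dist Q P + dist P R := dist_triangle Q P R
    _ ≤ 2*τ := by rw [dist_comm P R]; linarith
  have hQRπ : dist Q R < Real.pi := by linarith
  rcases eq_or_lt_of_le (dist_nonneg : (0:ℝ) ≤ dist Q R) with hQR0 | hQR0
  · -- degenerate case Q = R
    have hQReq : Q = R := by
      rw [← dist_eq_zero]; exact hQR0.symm
    have hMQ : H.interp Q R (1/2) = Q := by
      have h0 : H.interp Q R 0 = Q := H.interp_zero Q R hQRπ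
      have hd := H.interp_dist Q R hQRπ 0 (1/2)
        ⟨le_refl 0, by norm_num⟩ ⟨by norm_num, by norm_num⟩
      rw [h0, ← hQR0, mul_zero] at hd
      exact (dist_eq_zero.mp hd).symm
    rw [hMQ, hQReq, dist_self]
    norm_num
    linarith
  · -- main case
    set M := H.interp Q R (1/2) with hM
    have hQM : dist Q M ≤ τ := by
      have h0 : H.interp Q R 0 = Q := H.interp_zero Q R hQRπ
      have hd := H.interp_dist Q R hQRπ 0 (1/2)
        ⟨le_refl 0, by norm_num⟩ ⟨by norm_num, by norm_num⟩
      rw [h0, ← hM] at hd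
      rw [hd]
      rw [show |(0:ℝ) - 1/2| = 1/2 by norm_num]
      linarith
    -- integrability
    have hcR : Continuous fun y : Y => dist y R ^ 2 :=
      (continuous_id.dist continuous_const).pow 2
    have hcQ : Continuous fun y : Y => dist y Q ^ 2 :=
      (continuous_id.dist continuous_const).pow 2
    have hcM : Continuous fun y : Y => dist y M ^ 2 :=
      (continuous_id.dist continuous_const).pow 2
    have hIR : Integrable (fun x => dist (f x) R ^ 2) μ := by
      apply Integrable.mono' (integrable_const ((2*τ)^2))
        (hcR.comp_stronglyMeasurable hf).aestronglyMeasurable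
      filter_upwards [hball] with x hx
      have h1 : dist (f x) R ≤ 2*τ := by
        calc dist (f x) R ≤ dist (f x) P + dist P R := dist_triangle _ _ _
        _ ≤ 2*τ := by rw [dist_comm P R]; linarith
      rw [Real.norm_eq_abs, abs_of_nonneg (by positivity)]
      nlinarith [dist_nonneg (x := f x) (y := R)]
    have hIQ : Integrable (fun x => dist (f x) Q ^ 2) μ := by
      apply Integrable.mono' (integrable_const ((2*τ)^2))
        (hcQ.comp_stronglyMeasurable hf).aestronglyMeasurable
      filter_upwards [hball] with x hx
      have h1 : dist (f x) Q ≤ 2*τ := by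
        calc dist (f x) Q ≤ dist (f x) P + dist P Q := dist_triangle _ _ _
        _ ≤ 2*τ := by rw [dist_comm P Q]; linarith
      rw [Real.norm_eq_abs, abs_of_nonneg (by positivity)]
      nlinarith [dist_nonneg (x := f x) (y := Q)]
    have hIM : Integrable (fun x => dist (f x) M ^ 2) μ := by
      apply Integrable.mono' (integrable_const ((3*τ)^2))
        (hcM.comp_stronglyMeasurable hf).aestronglyMeasurable
      filter_upwards [hball] with x hx
      have h1 : dist (f x) M ≤ 3*τ := by
        calc dist (f x) M ≤ dist (f x) Q + dist Q M := dist_triangle _ _ _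
        _ ≤ 3*τ := by
          have : dist (f x) Q ≤ dist (f x) P + dist P Q := dist_triangle _ _ _
          rw [dist_comm P Q] at this
          linarith
      rw [Real.norm_eq_abs, abs_of_nonneg (by positivity)]
      nlinarith [dist_nonneg (x := f x) (y := M)]
    -- pointwise inequality
    have hpt : ∀ᵐ x ∂μ, (1/8) * Real.cos (2*τ) * dist Q R ^ 2 ≤
        (1/2) * (dist (f x) R ^ 2 + dist (f x) Q ^ 2) - dist (f x) M ^ 2 := by
      filter_upwards [hball] with x hx
      set W := f x with hW
      have hRW : dist R W ≤ 2*τ := by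
        calc dist R W ≤ dist R P + dist P W := dist_triangle _ _ _
        _ ≤ 2*τ := by rw [dist_comm P W]; linarith
      have hWQ : dist W Q ≤ 2*τ := by
        calc dist W Q ≤ dist W P + dist P Q := dist_triangle _ _ _
        _ ≤ 2*τ := by rw [dist_comm P Q]; linarith
      have htri : dist Q R ≤ dist R W + dist W Q := by
        calc dist Q R ≤ dist Q W + dist W R := dist_triangle Q W R
        _ = dist R W + dist W Q := by rw [dist_comm Q W, dist_comm W R]; ring
      have hB := aux_lemB H hτ0 hτ Q R W hQR0 hQRle hRW hWQ
      have hA := aux_lemA hτ0 hτ (dist_nonneg : (0:ℝ) ≤ dist R W) hRW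
        (dist_nonneg : (0:ℝ) ≤ dist W Q) hWQ
        (dist_nonneg : (0:ℝ) ≤ dist Q R) hQRle htri
        (dist_nonneg : (0:ℝ) ≤ dist W M) (hB.trans_eq (by norm_num))
      have e1 : dist W R = dist R W := dist_comm W R
      have e2 : dist W M = dist (f x) M := rfl
      calc (1/8) * Real.cos (2*τ) * dist Q R ^ 2
          ≤ (1/2) * (dist R W ^ 2 + dist W Q ^ 2) - dist W M ^ 2 := hA
      _ = (1/2) * (dist (f x) R ^ 2 + dist (f x) Q ^ 2) - dist (f x) M ^ 2 := by
          rw [dist_comm R W]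
    -- integrate
    have hint1 : Integrable
        (fun x => (1/2:ℝ) * (dist (f x) R ^ 2 + dist (f x) Q ^ 2)) μ :=
      (hIR.add hIQ).const_mul _
    have hint : Integrable
        (fun x => (1/2) * (dist (f x) R ^ 2 + dist (f x) Q ^ 2) - dist (f x) M ^ 2) μ :=
      hint1.sub hIM
    have hmono := integral_mono_ae (integrable_const _) hint hpt
    rw [integral_const, integral_sub hint1 hIM, integral_const_mul,
      integral_add hIR hIQ, smul_eq_mul] at hmono
    calc (1 / 8) * Real.cos (2 * τ) * dist Q R ^ 2 * (μ Set.univ).toReal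
        = (μ Set.univ).toReal * ((1/8) * Real.cos (2*τ) * dist Q R ^ 2) := by ring
    _ ≤ _ := hmono.trans_eq (by norm_num)
end
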